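/- arXiv:0907.5583 — 2 statements merged into one kernel-verified Lean document; each statement's English description precedes it below -/
import Mathlib

section
/- On ℝ⁴ ∖ {0} with r(p) = ‖p‖, define the 1-forms E⁰(p)(v) = (p₀v₀ + p₁v₁ + p₂v₂ + p₃v₃)/r, E¹(p)(v) = (−p₁v₀ + p₀v₁ + p₃v₂ − p₂v₃)/r, E²(p)(v) = (−p₂v₀ − p₃v₁ + p₀v₂ + p₁v₃)/r, E³(p)(v) = (−p₃v₀ + p₂v₁ − p₁v₂ + p₀v₃)/r. Then for all p ∈ ℝ⁴ ∖ {0} and u, v ∈ ℝ⁴: dE⁰(p)(u,v) = 0, dE¹(p)(u,v) = (1/r)(E⁰∧E¹)(p)(u,v) − (2/r)(E²∧E³)(p)(u,v), dE²(p)(u,v) = (1/r)(E⁰∧E²)(p)(u,v) + (2/r)(E¹∧E³)(p)(u,v), and dE³(p)(u,v) = (1/r)(E⁰∧E³)(p)(u,v) − (2/r)(E¹∧E²)(p)(u,v). -/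
noncomputable section

/-- Exterior derivative of a 1-form on `ℝ⁴` (Euclidean). -/
def exd (η : EuclideanSpace ℝ (Fin 4) → (EuclideanSpace ℝ (Fin 4) →L[ℝ] ℝ))
    (p u v : EuclideanSpace ℝ (Fin 4)) : ℝ :=
  (fderiv ℝ η p u) v - (fderiv ℝ η p v) u

/-- Wedge product of two 1-forms on `ℝ⁴` (Euclidean). -/
def wedge (η ξ : EuclideanSpace ℝ (Fin 4) → (EuclideanSpace ℝ (Fin 4) →L[ℝ] ℝ))
    (p u v : EuclideanSpace ℝ (Fin 4)) : ℝ :=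
  η p u * ξ p v - η p v * ξ p u

/-- The quaternionic Maurer–Cartan coframe `E⁰, E¹, E², E³` on `ℝ⁴ ∖ {0}`. -/
def E : Fin 4 → EuclideanSpace ℝ (Fin 4) → (EuclideanSpace ℝ (Fin 4) →L[ℝ] ℝ) :=
  ![fun p => (1 / ‖p‖) • (p 0 • EuclideanSpace.proj (0 : Fin 4)
      + p 1 • EuclideanSpace.proj (1 : Fin 4)
      + p 2 • EuclideanSpace.proj (2 : Fin 4)
      + p 3 • EuclideanSpace.proj (3 : Fin 4)),
    fun p => (1 / ‖p‖) • ((-p 1) • EuclideanSpace.proj (0 : Fin 4)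
      + p 0 • EuclideanSpace.proj (1 : Fin 4)
      + p 3 • EuclideanSpace.proj (2 : Fin 4)
      + (-p 2) • EuclideanSpace.proj (3 : Fin 4)),
    fun p => (1 / ‖p‖) • ((-p 2) • EuclideanSpace.proj (0 : Fin 4)
      + (-p 3) • EuclideanSpace.proj (1 : Fin 4)
      + p 0 • EuclideanSpace.proj (2 : Fin 4)
      + p 1 • EuclideanSpace.proj (3 : Fin 4)),
    fun p => (1 / ‖p‖) • ((-p 3) • EuclideanSpace.proj (0 : Fin 4)
      + p 2 • EuclideanSpace.proj (1 : Fin 4)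
      + (-p 1) • EuclideanSpace.proj (2 : Fin 4)
      + p 0 • EuclideanSpace.proj (3 : Fin 4))]

set_option maxHeartbeats 1000000

abbrev V := EuclideanSpace ℝ (Fin 4)

def Pr (i : Fin 4) : V →L[ℝ] ℝ := EuclideanSpace.proj i

lemma norm_eq_sqrt (q : V) : ‖q‖ = Real.sqrt (q 0^2 + q 1^2 + q 2^2 + q 3^2) := by
  rw [EuclideanSpace.norm_eq]
  congr 1
  rw [Fin.sum_univ_four]
  simp [Real.norm_eq_abs, sq_abs]

lemma hasFDerivAt_invnorm (p : V) (hp : p ≠ 0) :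
    HasFDerivAt (fun q : V => 1/‖q‖)
      ((-(‖p‖^3)⁻¹) • (p 0 • Pr 0 + p 1 • Pr 1 + p 2 • Pr 2 + p 3 • Pr 3)) p := by
  have hnp : ‖p‖ ≠ 0 := norm_ne_zero_iff.mpr hp
  have h0 : HasFDerivAt (fun q : V => q 0) (Pr 0) p := (Pr 0).hasFDerivAt
  have h1 : HasFDerivAt (fun q : V => q 1) (Pr 1) p := (Pr 1).hasFDerivAt
  have h2 : HasFDerivAt (fun q : V => q 2) (Pr 2) p := (Pr 2).hasFDerivAt
  have h3 : HasFDerivAt (fun q : V => q 3) (Pr 3) p := (Pr 3).hasFDerivAt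
  have hQ : HasFDerivAt (fun q : V => q 0^2 + q 1^2 + q 2^2 + q 3^2)
      ((2*p 0) • Pr 0 + (2*p 1) • Pr 1 + (2*p 2) • Pr 2 + (2*p 3) • Pr 3) p := by
    simp only [pow_two]
    have := (((h0.mul h0).add (h1.mul h1)).add (h2.mul h2)).add (h3.mul h3)
    refine this.congr_fderiv ?_
    ext w
    simp [Pr]
    ring
  have hQp : p 0^2 + p 1^2 + p 2^2 + p 3^2 = ‖p‖^2 := by
    rw [norm_eq_sqrt, Real.sq_sqrt]; positivity
  have hQne : p 0^2 + p 1^2 + p 2^2 + p 3^2 ≠ 0 := by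
    rw [hQp]; exact pow_ne_zero _ hnp
  have hs := hQ.sqrt hQne
  have hnorm : HasFDerivAt (fun q : V => ‖q‖)
      ((1 / (2 * ‖p‖)) • ((2*p 0) • Pr 0 + (2*p 1) • Pr 1 + (2*p 2) • Pr 2 + (2*p 3) • Pr 3)) p := by
    have hfn : (fun q : V => Real.sqrt (q 0^2 + q 1^2 + q 2^2 + q 3^2)) = fun q : V => ‖q‖ := by
      funext q; rw [norm_eq_sqrt]
    rw [← hfn]
    have hsp : Real.sqrt (p 0^2 + p 1^2 + p 2^2 + p 3^2) = ‖p‖ := (norm_eq_sqrt p).symm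
    rw [← hsp]
    exact hs
  have hinv := (hasDerivAt_inv hnp).comp_hasFDerivAt p hnorm
  have hfe : (fun q : V => 1/‖q‖) = fun q : V => (‖q‖)⁻¹ := by
    funext q; rw [one_div]
  rw [hfe]
  refine hinv.congr_fderiv ?_
  ext w
  simp [Pr, smul_smul]
  field_simp

lemma key (Φ : V →L[ℝ] (V →L[ℝ] ℝ)) (p : V) (hp : p ≠ 0) (u v : V) :
    fderiv ℝ (fun q => (1/‖q‖) • Φ q) p u v
      = (1/‖p‖) * Φ u v - ((p 0*u 0 + p 1*u 1 + p 2*u 2 + p 3*u 3)/‖p‖^3) * Φ p v := by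
  have h := ((hasFDerivAt_invnorm p hp).smul Φ.hasFDerivAt).fderiv
  change fderiv ℝ ((fun q : V => 1/‖q‖) • ⇑Φ) p u v = _
  rw [h]
  simp [Pr, smul_smul]
  ring

def Phi : Fin 4 → (V →L[ℝ] (V →L[ℝ] ℝ)) :=
  ![(Pr 0).smulRight (Pr 0) + (Pr 1).smulRight (Pr 1)
      + (Pr 2).smulRight (Pr 2) + (Pr 3).smulRight (Pr 3),
    (-(Pr 1)).smulRight (Pr 0) + (Pr 0).smulRight (Pr 1)
      + (Pr 3).smulRight (Pr 2) + (-(Pr 2)).smulRight (Pr 3),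
    (-(Pr 2)).smulRight (Pr 0) + (-(Pr 3)).smulRight (Pr 1)
      + (Pr 0).smulRight (Pr 2) + (Pr 1).smulRight (Pr 3),
    (-(Pr 3)).smulRight (Pr 0) + (Pr 2).smulRight (Pr 1)
      + (-(Pr 1)).smulRight (Pr 2) + (Pr 0).smulRight (Pr 3)]

lemma E_eq (a : Fin 4) : E a = fun q => (1/‖q‖) • Phi a q := by
  fin_cases a <;>
  · funext q
    refine ContinuousLinearMap.ext fun w => ?_
    simp [E, Phi, Pr]

/-- The structure equations of the quaternionic Maurer–Cartan coframe on
`ℝ⁴ ∖ {0}`: `dE⁰ = 0`, `dE¹ = (1/r)E⁰∧E¹ − (2/r)E²∧E³`,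
`dE² = (1/r)E⁰∧E² + (2/r)E¹∧E³`, `dE³ = (1/r)E⁰∧E³ − (2/r)E¹∧E²`. -/
theorem maurer_cartan_structure_equations (p : EuclideanSpace ℝ (Fin 4))
    (hp : p ≠ 0) (u v : EuclideanSpace ℝ (Fin 4)) :
    exd (E 0) p u v = 0 ∧
    exd (E 1) p u v = (1 / ‖p‖) * wedge (E 0) (E 1) p u v
      - (2 / ‖p‖) * wedge (E 2) (E 3) p u v ∧
    exd (E 2) p u v = (1 / ‖p‖) * wedge (E 0) (E 2) p u v
      + (2 / ‖p‖) * wedge (E 1) (E 3) p u v ∧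
    exd (E 3) p u v = (1 / ‖p‖) * wedge (E 0) (E 3) p u v
      - (2 / ‖p‖) * wedge (E 1) (E 2) p u v := by
  have hnp : ‖p‖ ≠ 0 := norm_ne_zero_iff.mpr hp
  have hr2 : ‖p‖^2 = p 0^2 + p 1^2 + p 2^2 + p 3^2 := by
    rw [norm_eq_sqrt, Real.sq_sqrt]; positivity
  have h3 : ‖p‖^3 = ‖p‖ * (p 0^2 + p 1^2 + p 2^2 + p 3^2) := by
    rw [← hr2]; ring
  have hinv : ‖p‖^2 * (‖p‖⁻¹)^3 = ‖p‖⁻¹ := by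
    field_simp
  refine ⟨?_, ?_, ?_, ?_⟩
  · rw [exd, E_eq 0, key _ p hp u v, key _ p hp v u]
    simp [wedge, E, Phi, Pr]
    ring
  · rw [exd, E_eq 1, key _ p hp u v, key _ p hp v u]
    simp [wedge, E, Phi, Pr]
    linear_combination ((2*(-(u 1*v 0) + u 0*v 1 + u 3*v 2 - u 2*v 3))/‖p‖^3) * hr2 - (2*(-(u 1*v 0) + u 0*v 1 + u 3*v 2 - u 2*v 3)) * hinv
  · rw [exd, E_eq 2, key _ p hp u v, key _ p hp v u]
    simp [wedge, E, Phi, Pr]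
    linear_combination ((2*(-(u 2*v 0) - u 3*v 1 + u 0*v 2 + u 1*v 3))/‖p‖^3) * hr2 - (2*(-(u 2*v 0) - u 3*v 1 + u 0*v 2 + u 1*v 3)) * hinv
  · rw [exd, E_eq 3, key _ p hp u v, key _ p hp v u]
    simp [wedge, E, Phi, Pr]
    linear_combination ((2*(-(u 3*v 0) + u 2*v 1 - u 1*v 2 + u 0*v 3))/‖p‖^3) * hr2 - (2*(-(u 3*v 0) + u 2*v 1 - u 1*v 2 + u 0*v 3)) * hinv


end
end

section
/- On ℝ⁴ ∖ {0} with r(p) = ‖p‖, let E⁰, E¹, E², E³ be the 1-forms E⁰(p)(v) = (p₀v₀ + p₁v₁ + p₂v₂ + p₃v₃)/r, E¹(p)(v) = (−p₁v₀ + p₀v₁ + p₃v₂ − p₂v₃)/r, E²(p)(v) = (−p₂v₀ − p₃v₁ + p₀v₂ + p₁v₃)/r, E³(p)(v) = (−p₃v₀ + p₂v₁ − p₁v₂ + p₀v₃)/r, and define the antisymmetric connection 1-forms ω^a{}_b = −ω^b{}_a (a,b ∈ {0,1,2,3}) by ω^i{}_k = (1/r) Σ_j ε_{ijk} E^j and ω^i{}_0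 = (1/r) E^i for i,j,k ∈ {1,2,3}, where ε is the Levi-Civita symbol. Then the torsionless condition holds: for each a and all p ∈ ℝ⁴ ∖ {0}, u, v ∈ ℝ⁴, dE^a(p)(u,v) + Σ_b (ω^a{}_b ∧ E^b)(p)(u,v) = 0. (Thus ω is the Levi–Civita connection of the Euclidean metric expressed in the quaternionic frame E.) -/
noncomputable section

/-- The Levi-Civita symbol on three (spatial) indices. -/
def eps (i j k : Fin 3) : ℝ :=
  if (i, j, k) = (0, 1, 2) ∨ (i, j, k) = (1, 2, 0) ∨ (i, j, k) = (2, 0, 1) then 1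
  else if (i, j, k) = (0, 2, 1) ∨ (i, j, k) = (2, 1, 0) ∨ (i, j, k) = (1, 0, 2) then -1
  else 0

open scoped RealInnerProductSpace

abbrev E4 := EuclideanSpace ℝ (Fin 4)
abbrev P (i : Fin 4) : E4 →L[ℝ] ℝ := EuclideanSpace.proj i
def F : Fin 4 → (E4 →L[ℝ] (E4 →L[ℝ] ℝ)) :=
  ![ (P 0).smulRight (P 0) + (P 1).smulRight (P 1) + (P 2).smulRight (P 2) + (P 3).smulRight (P 3),
     -((P 1).smulRight (P 0)) + (P 0).smulRight (P 1) + (P 3).smulRight (P 2) - (P 2).smulRight (P 3),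
     -((P 2).smulRight (P 0)) - (P 3).smulRight (P 1) + (P 0).smulRight (P 2) + (P 1).smulRight (P 3),
     -((P 3).smulRight (P 0)) + (P 2).smulRight (P 1) - (P 1).smulRight (P 2) + (P 0).smulRight (P 3)]

lemma F_apply (a : Fin 4) (x : E4) (w : E4) : F a x w =
    (![fun x w => x 0 * w 0 + x 1 * w 1 + x 2 * w 2 + x 3 * w 3,
       fun x w => -(x 1 * w 0) + x 0 * w 1 + x 3 * w 2 - x 2 * w 3,
       fun x w => -(x 2 * w 0) - x 3 * w 1 + x 0 * w 2 + x 1 * w 3,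
       fun x w => -(x 3 * w 0) + x 2 * w 1 - x 1 * w 2 + x 0 * w 3] :
       Fin 4 → E4 → E4 → ℝ) a x w := by
  fin_cases a <;>
    simp only [F, Fin.reduceFinMk, Fin.mk_zero, Fin.mk_one,
      Matrix.cons_val_zero, Matrix.cons_val_one, Matrix.head_cons,
      Matrix.cons_val_two, Matrix.tail_cons, Matrix.cons_val_three,
      ContinuousLinearMap.add_apply, ContinuousLinearMap.sub_apply,
      ContinuousLinearMap.neg_apply, ContinuousLinearMap.smulRight_apply,
      PiLp.proj_apply, ContinuousLinearMap.smul_apply, smul_eq_mul, Fin.isValue]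

lemma E_apply (a : Fin 4) (x : E4) (w : E4) : E a x w = ‖x‖⁻¹ * F a x w := by
  rw [F_apply]
  fin_cases a <;>
    simp only [E, Fin.reduceFinMk, Fin.mk_zero, Fin.mk_one,
      Matrix.cons_val_zero, Matrix.cons_val_one, Matrix.head_cons,
      Matrix.cons_val_two, Matrix.tail_cons, Matrix.cons_val_three,
      ContinuousLinearMap.add_apply, ContinuousLinearMap.sub_apply,
      ContinuousLinearMap.neg_apply,
      PiLp.proj_apply, ContinuousLinearMap.smul_apply, smul_eq_mul, Fin.isValue,
      one_div] <;> ring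

lemma hEF (a : Fin 4) (x : E4) : E a x = ‖x‖⁻¹ • F a x := by
  ext w
  rw [ContinuousLinearMap.smul_apply, smul_eq_mul, E_apply]

lemma hasFDerivAt_norm4 (p : E4) (hp : p ≠ 0) :
    HasFDerivAt (fun x : E4 => ‖x‖) (‖p‖⁻¹ • innerSL ℝ p) p := by
  have h2 : HasFDerivAt (fun x : E4 => ‖x‖ ^ 2) (2 • (innerSL ℝ p)) p := by
    simpa using (hasFDerivAt_id p).norm_sq
  have h3 := h2.sqrt (pow_ne_zero 2 (norm_ne_zero_iff.2 hp))
  simp only [Real.sqrt_sq (norm_nonneg _)] at h3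
  convert h3 using 1
  ext w
  have hr : ‖p‖ ≠ 0 := norm_ne_zero_iff.2 hp
  simp [two_smul]
  field_simp
  ring
  ext w; simp; ring

lemma fderiv_E_apply (a : Fin 4) {p : E4} (hp : p ≠ 0) (u v : E4) :
    (fderiv ℝ (E a) p u) v
      = ‖p‖⁻¹ * (F a u v) - (‖p‖ ^ 2)⁻¹ * (‖p‖⁻¹ * ⟪p, u⟫) * (F a p v) := by
  have hn := hasFDerivAt_norm4 p hp
  have hinv : HasFDerivAt (fun x : E4 => ‖x‖⁻¹)
      ((-(‖p‖ ^ 2)⁻¹) • (‖p‖⁻¹ • innerSL ℝ p)) p :=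
    (hasDerivAt_inv (norm_ne_zero_iff.2 hp)).comp_hasFDerivAt p hn
  have hfa := hinv.smul (F a).hasFDerivAt
  have hEeq : E a = fun x => ‖x‖⁻¹ • F a x := funext (hEF a)
  rw [hEeq, show (fun x => ‖x‖⁻¹ • F a x) = (fun x : E4 => ‖x‖⁻¹) • ⇑(F a) from rfl, hfa.fderiv]
  simp only [ContinuousLinearMap.add_apply, ContinuousLinearMap.smul_apply,
    ContinuousLinearMap.smulRight_apply, smul_eq_mul, innerSL_apply_apply,
    ContinuousLinearMap.coe_smul', Pi.smul_apply]
  ring_nf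
  try rfl

set_option maxHeartbeats 1000000 in
/-- The connection 1-forms `ω^i{}_k = (1/r) ε_{ijk} E^j`, `ω^i{}_0 = (1/r) E^i`,
antisymmetric (`ω^a{}_b = −ω^b{}_a`), satisfy the torsionless condition
`dE^a + ω^a{}_b ∧ E^b = 0` for the quaternionic Maurer–Cartan coframe: thus `ω`
is the Levi–Civita connection of the Euclidean metric in the quaternionic
frame. -/
theorem quaternionic_frame_levi_civita
    (ω : Fin 4 → Fin 4 → EuclideanSpace ℝ (Fin 4) → (EuclideanSpace ℝ (Fin 4) →L[ℝ] ℝ))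
    (hAnti : ∀ a b, ∀ p, ω a b p = -(ω b a p))
    (hSpatial : ∀ i k : Fin 3, ∀ p,
      ω i.succ k.succ p = (1 / ‖p‖) • ∑ j : Fin 3, eps i j k • E j.succ p)
    (hTime : ∀ i : Fin 3, ∀ p, ω i.succ 0 p = (1 / ‖p‖) • E i.succ p) :
    ∀ a : Fin 4, ∀ p : EuclideanSpace ℝ (Fin 4), p ≠ 0 →
      ∀ u v : EuclideanSpace ℝ (Fin 4),
        exd (E a) p u v + ∑ b : Fin 4, wedge (ω a b) (E b) p u v = 0 := by
  intro a p hp u v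
  have hr : ‖p‖ ≠ 0 := norm_ne_zero_iff.2 hp
  have hkey : ‖p‖ ^ 2 = p 0 ^ 2 + p 1 ^ 2 + p 2 ^ 2 + p 3 ^ 2 := by
    rw [← real_inner_self_eq_norm_sq]
    simp [PiLp.inner_apply, RCLike.inner_apply, Fin.sum_univ_four]
    rw [EuclideanSpace.norm_eq, Real.sq_sqrt (by positivity), Fin.sum_univ_four]
    simp only [Real.norm_eq_abs, sq_abs]
  have hdiag : ∀ b (w : E4), ω b b p w = 0 := by
    intro b w
    have h := congrArg (fun (L : E4 →L[ℝ] ℝ) => L w) (hAnti b b p)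
    simp only [ContinuousLinearMap.neg_apply] at h
    linarith
  have hT : ∀ i : Fin 3, ∀ w, ω i.succ 0 p w = ‖p‖⁻¹ * E i.succ p w := by
    intro i w
    rw [hTime]
    simp [one_div]
  have hT' : ∀ i : Fin 3, ∀ w, ω 0 i.succ p w = -(‖p‖⁻¹ * E i.succ p w) := by
    intro i w
    rw [hAnti 0 i.succ p]
    simp [hT]
  have hS : ∀ i k : Fin 3, ∀ w, ω i.succ k.succ p w
      = ‖p‖⁻¹ * (eps i 0 k * E 1 p w + eps i 1 k * E 2 p w + eps i 2 k * E 3 p w) := by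
    intro i k w
    rw [hSpatial]
    simp only [ContinuousLinearMap.smul_apply, ContinuousLinearMap.sum_apply,
      Fin.sum_univ_three, smul_eq_mul, one_div,
      show ((0:Fin 3)).succ = (1:Fin 4) from rfl, show ((1:Fin 3)).succ = (2:Fin 4) from rfl,
      show ((2:Fin 3)).succ = (3:Fin 4) from rfl]
    simp only [ContinuousLinearMap.add_apply, ContinuousLinearMap.smul_apply, smul_eq_mul]
    try ring
  have hip : ∀ w : E4, ⟪p, w⟫ = p 0 * w 0 + p 1 * w 1 + p 2 * w 2 + p 3 * w 3 := by
    intro w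
    simp [PiLp.inner_apply, RCLike.inner_apply, Fin.sum_univ_four]
    ring
  fin_cases a
  · -- a = 0
    show exd (E 0) p u v + _ = 0
    have h01 : ∀ w, ω 0 1 p w = -(‖p‖⁻¹ * E 1 p w) := hT' 0
    have h02 : ∀ w, ω 0 2 p w = -(‖p‖⁻¹ * E 2 p w) := hT' 1
    have h03 : ∀ w, ω 0 3 p w = -(‖p‖⁻¹ * E 3 p w) := hT' 2
    simp only [exd, wedge, Fin.sum_univ_four, Fin.mk_zero, Fin.mk_one, Fin.reduceFinMk, Fin.isValue]
    rw [fderiv_E_apply 0 hp u v, fderiv_E_apply 0 hp v u,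
      hdiag, hdiag, h01, h01, h02, h02, h03, h03, hip, hip]
    simp only [E_apply, F_apply, Matrix.cons_val_zero, Matrix.cons_val_one, Matrix.head_cons,
      Matrix.cons_val_two, Matrix.tail_cons, Matrix.cons_val_three]
    field_simp
    ring_nf
  · -- a = 1
    show exd (E 1) p u v + _ = 0
    have h10 : ∀ w, ω 1 0 p w = ‖p‖⁻¹ * E 1 p w := hT 0
    have h12' : ∀ w, ω 1 2 p w = ‖p‖⁻¹ * (eps 0 0 1 * E 1 p w + eps 0 1 1 * E 2 p w + eps 0 2 1 * E 3 p w) := hS 0 1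
    have h12 : ∀ w, ω 1 2 p w = ‖p‖⁻¹ * (-(E 3 p w)) := by
      intro w; rw [h12' w, (by simp +decide [eps] : eps 0 0 1 = (0:ℝ)),
        (by simp +decide [eps] : eps 0 1 1 = (0:ℝ)), (by simp +decide [eps] : eps 0 2 1 = (-1:ℝ))]
      ring
    have h13' : ∀ w, ω 1 3 p w = ‖p‖⁻¹ * (eps 0 0 2 * E 1 p w + eps 0 1 2 * E 2 p w + eps 0 2 2 * E 3 p w) := hS 0 2
    have h13 : ∀ w, ω 1 3 p w = ‖p‖⁻¹ * (E 2 p w) := by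
      intro w; rw [h13' w, (by simp +decide [eps] : eps 0 0 2 = (0:ℝ)),
        (by simp +decide [eps] : eps 0 1 2 = (1:ℝ)), (by simp +decide [eps] : eps 0 2 2 = (0:ℝ))]
      ring
    simp only [exd, wedge, Fin.sum_univ_four, Fin.mk_zero, Fin.mk_one, Fin.reduceFinMk, Fin.isValue]
    rw [fderiv_E_apply 1 hp u v, fderiv_E_apply 1 hp v u,
      hdiag, hdiag, h10, h10, h12, h12, h13, h13, hip, hip]
    simp only [E_apply, F_apply, Matrix.cons_val_zero, Matrix.cons_val_one, Matrix.head_cons,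
      Matrix.cons_val_two, Matrix.tail_cons, Matrix.cons_val_three]
    field_simp
    linear_combination (2*(u 0*v 1 - u 1*v 0 + u 3*v 2 - u 2*v 3)) * hkey
  · -- a = 2
    show exd (E 2) p u v + _ = 0
    have h20 : ∀ w, ω 2 0 p w = ‖p‖⁻¹ * E 2 p w := hT 1
    have h21' : ∀ w, ω 2 1 p w = ‖p‖⁻¹ * (eps 1 0 0 * E 1 p w + eps 1 1 0 * E 2 p w + eps 1 2 0 * E 3 p w) := hS 1 0
    have h21 : ∀ w, ω 2 1 p w = ‖p‖⁻¹ * (E 3 p w) := by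
      intro w; rw [h21' w, (by simp +decide [eps] : eps 1 0 0 = (0:ℝ)),
        (by simp +decide [eps] : eps 1 1 0 = (0:ℝ)), (by simp +decide [eps] : eps 1 2 0 = (1:ℝ))]
      ring
    have h23' : ∀ w, ω 2 3 p w = ‖p‖⁻¹ * (eps 1 0 2 * E 1 p w + eps 1 1 2 * E 2 p w + eps 1 2 2 * E 3 p w) := hS 1 2
    have h23 : ∀ w, ω 2 3 p w = ‖p‖⁻¹ * (-(E 1 p w)) := by
      intro w; rw [h23' w, (by simp +decide [eps] : eps 1 0 2 = (-1:ℝ)),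
        (by simp +decide [eps] : eps 1 1 2 = (0:ℝ)), (by simp +decide [eps] : eps 1 2 2 = (0:ℝ))]
      ring
    simp only [exd, wedge, Fin.sum_univ_four, Fin.mk_zero, Fin.mk_one, Fin.reduceFinMk, Fin.isValue]
    rw [fderiv_E_apply 2 hp u v, fderiv_E_apply 2 hp v u,
      hdiag, hdiag, h20, h20, h21, h21, h23, h23, hip, hip]
    simp only [E_apply, F_apply, Matrix.cons_val_zero, Matrix.cons_val_one, Matrix.head_cons,
      Matrix.cons_val_two, Matrix.tail_cons, Matrix.cons_val_three]
    field_simp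
    linear_combination (2*(u 0*v 2 - u 2*v 0 + u 1*v 3 - u 3*v 1)) * hkey
  · -- a = 3
    show exd (E 3) p u v + _ = 0
    have h30 : ∀ w, ω 3 0 p w = ‖p‖⁻¹ * E 3 p w := hT 2
    have h31' : ∀ w, ω 3 1 p w = ‖p‖⁻¹ * (eps 2 0 0 * E 1 p w + eps 2 1 0 * E 2 p w + eps 2 2 0 * E 3 p w) := hS 2 0
    have h31 : ∀ w, ω 3 1 p w = ‖p‖⁻¹ * (-(E 2 p w)) := by
      intro w; rw [h31' w, (by simp +decide [eps] : eps 2 0 0 = (0:ℝ)),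
        (by simp +decide [eps] : eps 2 1 0 = (-1:ℝ)), (by simp +decide [eps] : eps 2 2 0 = (0:ℝ))]
      ring
    have h32' : ∀ w, ω 3 2 p w = ‖p‖⁻¹ * (eps 2 0 1 * E 1 p w + eps 2 1 1 * E 2 p w + eps 2 2 1 * E 3 p w) := hS 2 1
    have h32 : ∀ w, ω 3 2 p w = ‖p‖⁻¹ * (E 1 p w) := by
      intro w; rw [h32' w, (by simp +decide [eps] : eps 2 0 1 = (1:ℝ)),
        (by simp +decide [eps] : eps 2 1 1 = (0:ℝ)), (by simp +decide [eps] : eps 2 2 1 = (0:ℝ))]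
      ring
    simp only [exd, wedge, Fin.sum_univ_four, Fin.mk_zero, Fin.mk_one, Fin.reduceFinMk, Fin.isValue]
    rw [fderiv_E_apply 3 hp u v, fderiv_E_apply 3 hp v u,
      hdiag, hdiag, h30, h30, h31, h31, h32, h32, hip, hip]
    simp only [E_apply, F_apply, Matrix.cons_val_zero, Matrix.cons_val_one, Matrix.head_cons,
      Matrix.cons_val_two, Matrix.tail_cons, Matrix.cons_val_three]
    field_simp
    linear_combination (2*(u 0*v 3 - u 3*v 0 + u 2*v 1 - u 1*v 2)) * hkey

end
end
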